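/- (Error-aware similarity favors nulls over erroneous values.) Let s, t : Fin n → Option V with n ≥ 1, and let a be an attribute with t a ≠ none and t a ≠ s a (an erroneous value of t at a). Let t' be the tuple with t' a = none and t' i = t i for all i ≠ a. Then E(s,t') ≥ E(s,t) + 1/n; in particular, nullifying a mismatching non-null value strictly increases the error-aware tuple similarity. -/

import Mathlib

/- Values with decidable equality; tuples over `n` non-key attributes are
functions `Fin n → Option V`, where `none` represents a null. -/
variable {V : Type*} [DecidableEq V]

/-- `α(s,t)`: the number of attributes on which `s` and `t` share the same value
(two nulls count as equal). -/
def alphaCount {n : ℕ} (s t : Fin n → Option V) : ℕ :=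
  (Finset.univ.filter fun i => s i = t i).card

/-- `δ(s,t)`: the number of attributes on which `s` and `t` differ and `t` is non-null. -/
def deltaCount {n : ℕ} (s t : Fin n → Option V) : ℕ :=
  (Finset.univ.filter fun i => s i ≠ t i ∧ t i ≠ none).card

/-- The error-aware tuple similarity `E(s,t) = (α(s,t) − δ(s,t))/n`. -/
def errSim {n : ℕ} (s t : Fin n → Option V) : ℚ :=
  ((alphaCount s t : ℚ) - (deltaCount s t : ℚ)) / n

/-- Error-aware similarity favors nulls over erroneous values: nullifying a
mismatching non-null value of `t` increases `E` by at least `1/n`, and in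
particular strictly increases it. -/
theorem errSim_nullify {n : ℕ} (hn : 1 ≤ n) (s t : Fin n → Option V) (a : Fin n)
    (hnn : t a ≠ none) (hmis : t a ≠ s a) :
    errSim s (Function.update t a none) ≥ errSim s t + 1 / (n : ℚ) ∧
    errSim s t < errSim s (Function.update t a none) := by
  set t' := Function.update t a none with ht'
  have hta' : t' a = none := Function.update_self a none t
  have halpha : alphaCount s t ≤ alphaCount s t' := by
    apply Finset.card_le_card
    intro i hi
    simp only [Finset.mem_filter, Finset.mem_univ, true_and] at hi ⊢
    have hia : i ≠ a := by
      rintro rfl; exact hmis hi.symm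
    rw [ht', Function.update_of_ne hia]; exact hi
  have hdelta : deltaCount s t' + 1 ≤ deltaCount s t := by
    have hss : (Finset.univ.filter fun i => s i ≠ t' i ∧ t' i ≠ none) ⊂
        (Finset.univ.filter fun i => s i ≠ t i ∧ t i ≠ none) := by
      constructor
      · intro i hi
        simp only [Finset.mem_filter, Finset.mem_univ, true_and] at hi ⊢
        have hia : i ≠ a := by
          rintro rfl; exact hi.2 hta'
        rw [ht'] at hi
        rw [Function.update_of_ne hia] at hi
        exact hi
      · intro h
        have ha : a ∈ (Finset.univ.filter fun i => s i ≠ t i ∧ t i ≠ none) := by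
          simp only [Finset.mem_filter, Finset.mem_univ, true_and]
          exact ⟨fun h => hmis h.symm, hnn⟩
        have := h ha
        simp only [Finset.mem_filter, Finset.mem_univ, true_and, hta'] at this
        exact this.2 rfl
    exact Nat.succ_le_of_lt (Finset.card_lt_card hss)
  have hn' : (0 : ℚ) < n := by exact_mod_cast hn
  have key : errSim s t + 1 / (n : ℚ) ≤ errSim s t' := by
    rw [errSim, errSim, ← add_div, div_le_div_iff₀ hn' hn']
    have h1 : (alphaCount s t : ℚ) ≤ alphaCount s t' := by exact_mod_cast halpha
    have h2 : (deltaCount s t' : ℚ) + 1 ≤ deltaCount s t := by exact_mod_cast hdelta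
    nlinarith
  refine ⟨key, ?_⟩
  have : 0 < 1 / (n : ℚ) := by positivity
  linarith
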